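/- Let F = {f_i} be a J-frame for a Krein space H with J-frame operator S, and let S^{1/2} be its J-selfadjoint holomorphic square root. Then P = {S^{-1/2} f_i}_{i∈I} is a Parseval J-frame for H (its J-frame operator is the identity), it is similar to F via S^{-1/2}, and sgn[S^{-1/2}f_i, S^{-1/2}f_i] = sgn[f_i, f_i] for every i. -/

import Mathlib

noncomputable section

open scoped Classical

open Function

/-- The indefinite inner product `[x,y] = ⟨Jx, y⟩` induced by an operator `J`. -/
def kre {E : Type*} [NormedAddCommGroup E] [InnerProductSpace ℂ E]
    (J : E →L[ℂ] E) (x y : E) : ℂ := @inner ℂ _ _ (J x) y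

/-- `J` is a fundamental symmetry: a selfadjoint unitary (involutive) operator. -/
def IsFundSym {E : Type*} [NormedAddCommGroup E] [InnerProductSpace ℂ E] [CompleteSpace E]
    (J : E →L[ℂ] E) : Prop :=
  IsSelfAdjoint J ∧ J.comp J = ContinuousLinearMap.id ℂ E

/-- The J-orthogonal companion of a subspace. -/
def JorthCompanion {E : Type*} [NormedAddCommGroup E] [InnerProductSpace ℂ E]
    (J : E →L[ℂ] E) (S : Submodule ℂ E) : Submodule ℂ E where
  carrier := {x | ∀ s ∈ S, kre J x s = 0}
  zero_mem' := by intro s hs; simp [kre]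
  add_mem' := by
    intro a b ha hb s hs
    have h1 := ha s hs
    have h2 := hb s hs
    simp only [kre, map_add, inner_add_left] at h1 h2 ⊢
    rw [h1, h2, add_zero]
  smul_mem' := by
    intro c x hx s hs
    have h1 := hx s hs
    simp only [kre, map_smul, inner_smul_left] at h1 ⊢
    rw [h1, mul_zero]

/-- Uniformly J-positive subspace. -/
def UnifJPos {E : Type*} [NormedAddCommGroup E] [InnerProductSpace ℂ E]
    (J : E →L[ℂ] E) (S : Submodule ℂ E) : Prop :=
  ∃ α : ℝ, 0 < α ∧ ∀ x ∈ S, α * ‖x‖ ^ 2 ≤ (kre J x x).re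

/-- Uniformly J-negative subspace. -/
def UnifJNeg {E : Type*} [NormedAddCommGroup E] [InnerProductSpace ℂ E]
    (J : E →L[ℂ] E) (S : Submodule ℂ E) : Prop :=
  ∃ α : ℝ, 0 < α ∧ ∀ x ∈ S, (kre J x x).re ≤ -(α * ‖x‖ ^ 2)

/-- Maximal uniformly J-positive subspace. -/
def MaxUnifJPos {E : Type*} [NormedAddCommGroup E] [InnerProductSpace ℂ E]
    (J : E →L[ℂ] E) (S : Submodule ℂ E) : Prop :=
  UnifJPos J S ∧ ∀ S' : Submodule ℂ E, UnifJPos J S' → S ≤ S' → S' = S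

/-- Maximal uniformly J-negative subspace. -/
def MaxUnifJNeg {E : Type*} [NormedAddCommGroup E] [InnerProductSpace ℂ E]
    (J : E →L[ℂ] E) (S : Submodule ℂ E) : Prop :=
  UnifJNeg J S ∧ ∀ S' : Submodule ℂ E, UnifJNeg J S' → S ≤ S' → S' = S

/-- J-selfadjoint operator (with respect to the indefinite inner product of `J`). -/
def IsJSelfAdj {E : Type*} [NormedAddCommGroup E] [InnerProductSpace ℂ E]
    (J : E →L[ℂ] E) (A : E →L[ℂ] E) : Prop :=
  ∀ x y : E, kre J (A x) y = kre J x (A y)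

/-- The J-order: `A ≤_J B` iff `B - A` is J-positive. -/
def JLe {E : Type*} [NormedAddCommGroup E] [InnerProductSpace ℂ E]
    (J : E →L[ℂ] E) (A B : E →L[ℂ] E) : Prop :=
  ∀ x : E, 0 ≤ (kre J (B x - A x) x).re ∧ (kre J (B x - A x) x).im = 0

/-- The subspace of `ℓ²(I)` supported on a subset (given by a predicate) of `I`. -/
def suppSub {I : Type*} (A : I → Prop) : Submodule ℂ (lp (fun _ : I => ℂ) 2) where
  carrier := {x | ∀ i, ¬ A i → x i = 0}
  zero_mem' := by intro i _; rfl
  add_mem' := by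
    intro a b ha hb i hi
    have : (↑(a + b) : ∀ i, ℂ) i = a i + b i := by
      rw [lp.coeFn_add]; rfl
    simp [this, ha i hi, hb i hi]
  smul_mem' := by
    intro c x hx i hi
    have : (↑(c • x) : ∀ i, ℂ) i = c • x i := by
      rw [lp.coeFn_smul]; rfl
    simp [this, hx i hi]

variable {H : Type*} [NormedAddCommGroup H] [InnerProductSpace ℂ H] [CompleteSpace H]
variable {I : Type*} [DecidableEq I]

/-- `i` is a "positive index" for the family `f` w.r.t. `J`: `[f i, f i] ≥ 0`. -/
def posIdx {H : Type*} [NormedAddCommGroup H] [InnerProductSpace ℂ H]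
    (J : H →L[ℂ] H) (f : I → H) (i : I) : Prop := 0 ≤ (kre J (f i) (f i)).re

/-- The sign `σ_i = sgn [f i, f i]` (as a complex scalar, `+1` on `I₊` and `-1` on `I₋`). -/
def sgnv {H : Type*} [NormedAddCommGroup H] [InnerProductSpace ℂ H]
    (J : H →L[ℂ] H) (f : I → H) (i : I) : ℂ := if posIdx J f i then 1 else -1

/-- Closure of the span of the vectors of the family `h` with positive indices (signs taken
from the family `f`). -/
def posSpan {H : Type*} [NormedAddCommGroup H] [InnerProductSpace ℂ H]
    (J : H →L[ℂ] H) (f h : I → H) : Submodule ℂ H :=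
  (Submodule.span ℂ {x | ∃ i, posIdx J f i ∧ h i = x}).topologicalClosure

/-- Closure of the span of the vectors of the family `h` with negative indices. -/
def negSpan {H : Type*} [NormedAddCommGroup H] [InnerProductSpace ℂ H]
    (J : H →L[ℂ] H) (f h : I → H) : Submodule ℂ H :=
  (Submodule.span ℂ {x | ∃ i, ¬ posIdx J f i ∧ h i = x}).topologicalClosure

/-- A Bessel family in a Hilbert space. -/
def IsBessel {H : Type*} [NormedAddCommGroup H] [InnerProductSpace ℂ H]
    (g : I → H) : Prop :=
  ∃ β : ℝ, ∀ (x : H) (s : Finset I),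
    ∑ i ∈ s, ‖@inner ℂ _ _ (g i) x‖ ^ 2 ≤ β * ‖x‖ ^ 2

/-- `g` is a dual family for `f`: the signs coincide and the two indefinite
reconstruction formulas hold. -/
def IsDualFamily {H : Type*} [NormedAddCommGroup H] [InnerProductSpace ℂ H]
    (J : H →L[ℂ] H) (f g : I → H) : Prop :=
  (∀ i, Real.sign ((kre J (g i) (g i)).re) = Real.sign ((kre J (f i) (f i)).re)) ∧
  (∀ x : H, HasSum (fun i => (sgnv J f i * kre J x (f i)) • g i) x) ∧
  (∀ x : H, HasSum (fun i => (sgnv J f i * kre J x (g i)) • f i) x)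


set_option maxHeartbeats 2000000 in
/-- `P = (S^(-1/2) f_i)` is a Parseval J-frame similar to `F` via
`S^(-1/2)`, with the same signs. -/
theorem canonical_parseval_jframe
    (J : H →L[ℂ] H) (hJ : IsFundSym J) (f : I → H)
    (T : lp (fun _ : I => ℂ) 2 →L[ℂ] H)
    (hT : ∀ i, T (lp.single 2 i (1:ℂ)) = f i)
    (hTsurj : Function.Surjective T)
    (Pp Pm : lp (fun _ : I => ℂ) 2 →L[ℂ] lp (fun _ : I => ℂ) 2)
    (hPp : ∀ (x : lp (fun _ : I => ℂ) 2) (i : I), Pp x i = if posIdx J f i then x i else 0)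
    (hPm : ∀ (x : lp (fun _ : I => ℂ) 2) (i : I), Pm x i = if posIdx J f i then 0 else x i)
    (hJF : MaxUnifJPos J (LinearMap.range (T.comp Pp : lp (fun _ : I => ℂ) 2 →ₗ[ℂ] H)) ∧
      MaxUnifJNeg J (LinearMap.range (T.comp Pm : lp (fun _ : I => ℂ) 2 →ₗ[ℂ] H)))
    (Tp : H →L[ℂ] lp (fun _ : I => ℂ) 2)
    (hTp : ∀ (x : lp (fun _ : I => ℂ) 2) (y : H), kre J (T x) y = kre (Pp - Pm) x (Tp y))
    (R : H →L[ℂ] H) (hRsq : R.comp R = T.comp Tp) (hRsa : IsJSelfAdj J R)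
    (Rinv : H →L[ℂ] H)
    (hR1 : R.comp Rinv = ContinuousLinearMap.id ℂ H)
    (hR2 : Rinv.comp R = ContinuousLinearMap.id ℂ H)
    (hRspec : ∀ z ∈ spectrum ℂ R, |z.im| < z.re) :
    (MaxUnifJPos J (LinearMap.range ((Rinv.comp T).comp Pp : lp (fun _ : I => ℂ) 2 →ₗ[ℂ] H)) ∧
        MaxUnifJNeg J (LinearMap.range ((Rinv.comp T).comp Pm : lp (fun _ : I => ℂ) 2 →ₗ[ℂ] H))) ∧
      (Rinv.comp (T.comp Tp)).comp Rinv = ContinuousLinearMap.id ℂ H ∧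
      (∀ i, Real.sign ((kre J (Rinv (f i)) (Rinv (f i))).re) =
        Real.sign ((kre J (f i) (f i)).re)) ∧
      (∃ U Uinv : H →L[ℂ] H, U.comp Uinv = ContinuousLinearMap.id ℂ H ∧
        Uinv.comp U = ContinuousLinearMap.id ℂ H ∧ ∀ i, U (f i) = Rinv (f i)) := by
    classical
  -- pointwise application of operator equalities
  have hRR : ∀ x : H, R (Rinv x) = x := fun x => by
    have := congrArg (fun (A : H →L[ℂ] H) => A x) hR1; simpa using this
  have hRR' : ∀ x : H, Rinv (R x) = x := fun x => by
    have := congrArg (fun (A : H →L[ℂ] H) => A x) hR2; simpa using this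
  have hS : ∀ x : H, T (Tp x) = R (R x) := fun x => by
    have := congrArg (fun (A : H →L[ℂ] H) => A x) hRsq; simpa using this.symm
  have hRinj : Function.Injective Rinv := by
    intro a b h
    have h1 : R (Rinv a) = R (Rinv b) := by rw [h]
    rwa [hRR, hRR] at h1
  have hRinvsa : ∀ a b : H, kre J (Rinv a) b = kre J a (Rinv b) := by
    intro a b
    calc kre J (Rinv a) b = kre J (Rinv a) (R (Rinv b)) := by rw [hRR]
      _ = kre J (R (Rinv a)) (Rinv b) := (hRsa _ _).symm
      _ = kre J a (Rinv b) := by rw [hRR]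
  -- basic facts about the projections Pp, Pm
  have hsum : ∀ x : lp (fun _ : I => ℂ) 2, Pp x + Pm x = x := by
    intro x
    apply lp.ext
    funext i
    have h1 : (↑(Pp x + Pm x) : ∀ _, ℂ) i = Pp x i + Pm x i := by
      rw [lp.coeFn_add]; rfl
    rw [h1, hPp, hPm]
    by_cases h : posIdx J f i <;> simp [h]
  have hPpPm : ∀ x : lp (fun _ : I => ℂ) 2, Pp (Pm x) = 0 := by
    intro x
    apply lp.ext
    funext i
    have h0 : (↑(0 : lp (fun _ : I => ℂ) 2) : ∀ _, ℂ) i = 0 := by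
      rw [lp.coeFn_zero]; rfl
    rw [h0, hPp, hPm]
    by_cases h : posIdx J f i <;> simp [h]
  have hPmPm : ∀ x : lp (fun _ : I => ℂ) 2, Pm (Pm x) = Pm x := by
    intro x
    apply lp.ext
    funext i
    rw [hPm, hPm]
    by_cases h : posIdx J f i <;> simp [h]
  have hPmPp : ∀ x : lp (fun _ : I => ℂ) 2, Pm (Pp x) = 0 := by
    intro x
    apply lp.ext
    funext i
    have h0 : (↑(0 : lp (fun _ : I => ℂ) 2) : ∀ _, ℂ) i = 0 := by
      rw [lp.coeFn_zero]; rfl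
    rw [h0, hPm, hPp]
    by_cases h : posIdx J f i <;> simp [h]
  have hPpPp : ∀ x : lp (fun _ : I => ℂ) 2, Pp (Pp x) = Pp x := by
    intro x
    apply lp.ext
    funext i
    rw [hPp, hPp]
    by_cases h : posIdx J f i <;> simp [h]
  -- cross orthogonality
  have hcross1 : ∀ a b : lp (fun _ : I => ℂ) 2, (inner ℂ (Pm a) (Pp b) : ℂ) = 0 := by
    intro a b
    rw [lp.inner_eq_tsum (𝕜 := ℂ)]
    have h0 : ∀ i, inner ℂ ((Pm a) i) ((Pp b) i) = 0 := by
      intro i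
      rw [hPm, hPp]
      by_cases h : posIdx J f i <;> simp [h]
    calc ∑' i, inner ℂ ((Pm a) i) ((Pp b) i) = ∑' (_ : I), (0:ℂ) := tsum_congr h0
      _ = 0 := tsum_zero
  have hcross2 : ∀ a b : lp (fun _ : I => ℂ) 2, (inner ℂ (Pp a) (Pm b) : ℂ) = 0 := by
    intro a b
    rw [lp.inner_eq_tsum (𝕜 := ℂ)]
    have h0 : ∀ i, inner ℂ ((Pp a) i) ((Pm b) i) = 0 := by
      intro i
      rw [hPp, hPm]
      by_cases h : posIdx J f i <;> simp [h]
    calc ∑' i, inner ℂ ((Pp a) i) ((Pm b) i) = ∑' (_ : I), (0:ℂ) := tsum_congr h0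
      _ = 0 := tsum_zero
  have hdiagm : ∀ a w : lp (fun _ : I => ℂ) 2, (inner ℂ (Pm a) w : ℂ) = inner ℂ (Pm a) (Pm w) := by
    intro a w
    conv_lhs => rw [← hsum w]
    rw [inner_add_right, hcross1, zero_add]
  have hdiagp : ∀ a w : lp (fun _ : I => ℂ) 2, (inner ℂ (Pp a) w : ℂ) = inner ℂ (Pp a) (Pp w) := by
    intro a w
    conv_lhs => rw [← hsum w]
    rw [inner_add_right, hcross2, add_zero]
  -- the main adjoint identity
  have hI1 : ∀ (x : lp (fun _ : I => ℂ) 2) (y : H),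
      kre J (T x) y = (inner ℂ (Pp x) (Tp y) : ℂ) - inner ℂ (Pm x) (Tp y) := by
    intro x y
    rw [hTp x y]
    show (inner ℂ ((Pp - Pm) x) (Tp y) : ℂ) = _
    rw [ContinuousLinearMap.sub_apply, inner_sub_left]
  set D : ℝ := ‖R‖ * (‖Rinv‖ * (‖Rinv‖ * ‖T‖)) with hD
  have hDnn : 0 ≤ D := by positivity
  -- the key computation on the positive side
  have keyP : ∀ x : lp (fun _ : I => ℂ) 2,
      kre J (Rinv (T (Pp x))) (Rinv (T (Pp x)))
        = (‖Tp (Rinv (Rinv (T (Pp x))))‖ : ℂ) ^ 2 ∧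
      ‖Rinv (T (Pp x))‖ ≤ D * ‖Tp (Rinv (Rinv (T (Pp x))))‖ := by
    intro x
    set m := T (Pp x) with hm
    set u := Rinv (Rinv m) with hu
    set w := Tp u with hw
    have hSu : T (Tp u) = m := by rw [hS, hu, hRR (Rinv m), hRR m]
    have hv : T (Pm w) = 0 := by
      have hveq : T (Pm w) = (T.comp Pp) (x - w) := by
        have h1 : T (Pp w) + T (Pm w) = m := by
          rw [← map_add, hsum w, hw]; exact hSu
        have : T (Pm w) = T (Pp x) - T (Pp w) := by
          have h2 := eq_sub_of_add_eq' h1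
          rw [hm] at h2; exact h2
        rw [this]
        simp [ContinuousLinearMap.comp_apply, map_sub]
      obtain ⟨α₀, hα₀, hposr⟩ := hJF.1.1
      obtain ⟨β₀, hβ₀, hnegr⟩ := hJF.2.1
      have hmem1 : T (Pm w) ∈ LinearMap.range (T.comp Pp : lp (fun _ : I => ℂ) 2 →ₗ[ℂ] H) :=
        LinearMap.mem_range.mpr ⟨x - w, hveq.symm⟩
      have hmem2 : T (Pm w) ∈ LinearMap.range (T.comp Pm : lp (fun _ : I => ℂ) 2 →ₗ[ℂ] H) :=
        LinearMap.mem_range.mpr ⟨w, rfl⟩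
      have h1 := hposr _ hmem1
      have h2 := hnegr _ hmem2
      have h3 : ‖T (Pm w)‖ ^ 2 ≤ 0 := by nlinarith
      have h4 : ‖T (Pm w)‖ ^ 2 = 0 := le_antisymm h3 (sq_nonneg _)
      have h5 : ‖T (Pm w)‖ = 0 := by
        exact pow_eq_zero_iff two_ne_zero |>.mp h4
      exact norm_eq_zero.mp h5
    have hPmw : Pm w = 0 := by
      have h0 : kre J (T (Pm w)) u = 0 := by rw [hv]; simp [kre]
      rw [hI1, hPpPm, hPmPm, inner_zero_left] at h0
      rw [← hw] at h0
      rw [hdiagm w w,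
        inner_self_eq_norm_sq_to_K (𝕜 := ℂ) (E := lp (fun _ : I => ℂ) 2), zero_sub,
        neg_eq_zero, ← RCLike.ofReal_pow, RCLike.ofReal_eq_zero] at h0
      have h3 : ‖Pm w‖ = 0 := pow_eq_zero_iff two_ne_zero |>.mp h0
      exact norm_eq_zero.mp h3
    have hPpw : Pp w = w := by
      have := hsum w; rw [hPmw, add_zero] at this; exact this
    constructor
    · calc kre J (Rinv m) (Rinv m) = kre J m (Rinv (Rinv m)) := by
            rw [hRinvsa]
        _ = kre J (T (Tp u)) u := by rw [hSu, ← hu]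
        _ = (inner ℂ (Pp (Tp u)) (Tp u) : ℂ) - inner ℂ (Pm (Tp u)) (Tp u) := hI1 _ _
        _ = (inner ℂ w w : ℂ) - 0 := by rw [← hw, hPpw, hPmw, inner_zero_left]
        _ = (‖w‖ : ℂ) ^ 2 := by
            rw [sub_zero, inner_self_eq_norm_sq_to_K (𝕜 := ℂ) (E := lp (fun _ : I => ℂ) 2)]
            rfl
    · have hb1 : Rinv m = R u := by rw [hu, hRR (Rinv m)]
      have hb3 : ‖u‖ ≤ ‖Rinv‖ * (‖Rinv‖ * (‖T‖ * ‖w‖)) := by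
        have h0 : u = Rinv (Rinv (T w)) := by rw [hw, hSu, ← hu]
        calc ‖u‖ = ‖Rinv (Rinv (T w))‖ := by rw [← h0]
          _ ≤ ‖Rinv‖ * ‖Rinv (T w)‖ := Rinv.le_opNorm _
          _ ≤ ‖Rinv‖ * (‖Rinv‖ * ‖T w‖) := by
              have h := Rinv.le_opNorm (T w)
              exact mul_le_mul_of_nonneg_left h (norm_nonneg _)
          _ ≤ ‖Rinv‖ * (‖Rinv‖ * (‖T‖ * ‖w‖)) := by
              have h := T.le_opNorm w
              exact mul_le_mul_of_nonneg_left
                (mul_le_mul_of_nonneg_left h (norm_nonneg _)) (norm_nonneg _)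
      calc ‖Rinv m‖ = ‖R u‖ := by rw [hb1]
        _ ≤ ‖R‖ * ‖u‖ := R.le_opNorm u
        _ ≤ D * ‖w‖ := by
            rw [hD]
            have hnn : (0:ℝ) ≤ ‖R‖ := norm_nonneg _
            nlinarith
  -- the key computation on the negative side
  have keyM : ∀ x : lp (fun _ : I => ℂ) 2,
      kre J (Rinv (T (Pm x))) (Rinv (T (Pm x)))
        = -((‖Tp (Rinv (Rinv (T (Pm x))))‖ : ℂ) ^ 2) ∧
      ‖Rinv (T (Pm x))‖ ≤ D * ‖Tp (Rinv (Rinv (T (Pm x))))‖ := by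
    intro x
    set m := T (Pm x) with hm
    set u := Rinv (Rinv m) with hu
    set w := Tp u with hw
    have hSu : T (Tp u) = m := by rw [hS, hu, hRR (Rinv m), hRR m]
    have hv : T (Pp w) = 0 := by
      have hveq : T (Pp w) = (T.comp Pm) (x - w) := by
        have h1 : T (Pp w) + T (Pm w) = m := by
          rw [← map_add, hsum w, hw]; exact hSu
        have : T (Pp w) = T (Pm x) - T (Pm w) := by
          have h2 := eq_sub_of_add_eq h1
          rw [hm] at h2; exact h2
        rw [this]
        simp [ContinuousLinearMap.comp_apply, map_sub]
      obtain ⟨α₀, hα₀, hposr⟩ := hJF.1.1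
      obtain ⟨β₀, hβ₀, hnegr⟩ := hJF.2.1
      have hmem1 : T (Pp w) ∈ LinearMap.range (T.comp Pp : lp (fun _ : I => ℂ) 2 →ₗ[ℂ] H) :=
        LinearMap.mem_range.mpr ⟨w, rfl⟩
      have hmem2 : T (Pp w) ∈ LinearMap.range (T.comp Pm : lp (fun _ : I => ℂ) 2 →ₗ[ℂ] H) :=
        LinearMap.mem_range.mpr ⟨x - w, hveq.symm⟩
      have h1 := hposr _ hmem1
      have h2 := hnegr _ hmem2
      have h3 : ‖T (Pp w)‖ ^ 2 ≤ 0 := by nlinarith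
      have h4 : ‖T (Pp w)‖ ^ 2 = 0 := le_antisymm h3 (sq_nonneg _)
      have h5 : ‖T (Pp w)‖ = 0 := pow_eq_zero_iff two_ne_zero |>.mp h4
      exact norm_eq_zero.mp h5
    have hPpw : Pp w = 0 := by
      have h0 : kre J (T (Pp w)) u = 0 := by rw [hv]; simp [kre]
      rw [hI1, hPpPp, hPmPp, inner_zero_left] at h0
      rw [← hw] at h0
      rw [hdiagp w w,
        inner_self_eq_norm_sq_to_K (𝕜 := ℂ) (E := lp (fun _ : I => ℂ) 2), sub_zero,
        ← RCLike.ofReal_pow, RCLike.ofReal_eq_zero] at h0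
      have h3 : ‖Pp w‖ = 0 := pow_eq_zero_iff two_ne_zero |>.mp h0
      exact norm_eq_zero.mp h3
    have hPmw : Pm w = w := by
      have := hsum w; rw [hPpw, zero_add] at this; exact this
    constructor
    · calc kre J (Rinv m) (Rinv m) = kre J m (Rinv (Rinv m)) := by
            rw [hRinvsa]
        _ = kre J (T (Tp u)) u := by rw [hSu, ← hu]
        _ = (inner ℂ (Pp (Tp u)) (Tp u) : ℂ) - inner ℂ (Pm (Tp u)) (Tp u) := hI1 _ _
        _ = (0 : ℂ) - inner ℂ w w := by rw [← hw, hPpw, hPmw, inner_zero_left]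
        _ = -((‖w‖ : ℂ) ^ 2) := by
            rw [zero_sub, inner_self_eq_norm_sq_to_K (𝕜 := ℂ) (E := lp (fun _ : I => ℂ) 2)]
            rfl
    · have hb1 : Rinv m = R u := by rw [hu, hRR (Rinv m)]
      have hb3 : ‖u‖ ≤ ‖Rinv‖ * (‖Rinv‖ * (‖T‖ * ‖w‖)) := by
        have h0 : u = Rinv (Rinv (T w)) := by rw [hw, hSu, ← hu]
        calc ‖u‖ = ‖Rinv (Rinv (T w))‖ := by rw [← h0]
          _ ≤ ‖Rinv‖ * ‖Rinv (T w)‖ := Rinv.le_opNorm _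
          _ ≤ ‖Rinv‖ * (‖Rinv‖ * ‖T w‖) := by
              have h := Rinv.le_opNorm (T w)
              exact mul_le_mul_of_nonneg_left h (norm_nonneg _)
          _ ≤ ‖Rinv‖ * (‖Rinv‖ * (‖T‖ * ‖w‖)) := by
              have h := T.le_opNorm w
              exact mul_le_mul_of_nonneg_left
                (mul_le_mul_of_nonneg_left h (norm_nonneg _)) (norm_nonneg _)
      calc ‖Rinv m‖ = ‖R u‖ := by rw [hb1]
        _ ≤ ‖R‖ * ‖u‖ := R.le_opNorm u
        _ ≤ D * ‖w‖ := by
            rw [hD]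
            have hnn : (0:ℝ) ≤ ‖R‖ := norm_nonneg _
            nlinarith
  -- uniform positivity and negativity of the transported ranges
  have hWpos : UnifJPos J (LinearMap.range ((Rinv.comp T).comp Pp : lp (fun _ : I => ℂ) 2 →ₗ[ℂ] H)) := by
    refine ⟨(D ^ 2 + 1)⁻¹, by positivity, ?_⟩
    intro z hz
    obtain ⟨x, hx⟩ := LinearMap.mem_range.mp hz
    have hz' : z = Rinv (T (Pp x)) := by rw [← hx]; rfl
    obtain ⟨hk, hb⟩ := keyP x
    rw [hz', hk]
    have hre : (((‖Tp (Rinv (Rinv (T (Pp x))))‖ : ℂ)) ^ 2).re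
        = ‖Tp (Rinv (Rinv (T (Pp x))))‖ ^ 2 := by
      norm_cast
    rw [hre]
    have hnn1 : (0:ℝ) ≤ ‖Rinv (T (Pp x))‖ := norm_nonneg _
    have hnn2 : (0:ℝ) ≤ ‖Tp (Rinv (Rinv (T (Pp x))))‖ := norm_nonneg _
    have hle : ‖Rinv (T (Pp x))‖ ^ 2 ≤ (D ^ 2 + 1) * ‖Tp (Rinv (Rinv (T (Pp x))))‖ ^ 2 := by
      nlinarith
    have hpos : (0:ℝ) < D ^ 2 + 1 := by positivity
    calc (D ^ 2 + 1)⁻¹ * ‖Rinv (T (Pp x))‖ ^ 2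
        ≤ (D ^ 2 + 1)⁻¹ * ((D ^ 2 + 1) * ‖Tp (Rinv (Rinv (T (Pp x))))‖ ^ 2) := by
          apply mul_le_mul_of_nonneg_left hle (by positivity)
      _ = ‖Tp (Rinv (Rinv (T (Pp x))))‖ ^ 2 := by
          field_simp
  have hWneg : UnifJNeg J (LinearMap.range ((Rinv.comp T).comp Pm : lp (fun _ : I => ℂ) 2 →ₗ[ℂ] H)) := by
    refine ⟨(D ^ 2 + 1)⁻¹, by positivity, ?_⟩
    intro z hz
    obtain ⟨x, hx⟩ := LinearMap.mem_range.mp hz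
    have hz' : z = Rinv (T (Pm x)) := by rw [← hx]; rfl
    obtain ⟨hk, hb⟩ := keyM x
    rw [hz', hk]
    have hre : (-((‖Tp (Rinv (Rinv (T (Pm x))))‖ : ℂ) ^ 2)).re
        = -(‖Tp (Rinv (Rinv (T (Pm x))))‖ ^ 2) := by
      norm_cast
    rw [hre]
    have hnn1 : (0:ℝ) ≤ ‖Rinv (T (Pm x))‖ := norm_nonneg _
    have hnn2 : (0:ℝ) ≤ ‖Tp (Rinv (Rinv (T (Pm x))))‖ := norm_nonneg _
    have hle : ‖Rinv (T (Pm x))‖ ^ 2 ≤ (D ^ 2 + 1) * ‖Tp (Rinv (Rinv (T (Pm x))))‖ ^ 2 := by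
      nlinarith
    have hpos : (0:ℝ) < D ^ 2 + 1 := by positivity
    have : (D ^ 2 + 1)⁻¹ * ‖Rinv (T (Pm x))‖ ^ 2 ≤ ‖Tp (Rinv (Rinv (T (Pm x))))‖ ^ 2 := by
      calc (D ^ 2 + 1)⁻¹ * ‖Rinv (T (Pm x))‖ ^ 2
          ≤ (D ^ 2 + 1)⁻¹ * ((D ^ 2 + 1) * ‖Tp (Rinv (Rinv (T (Pm x))))‖ ^ 2) := by
            apply mul_le_mul_of_nonneg_left hle (by positivity)
        _ = ‖Tp (Rinv (Rinv (T (Pm x))))‖ ^ 2 := by field_simp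
    linarith
  -- decomposition of H
  have hdecomp : ∀ h : H, ∃ a ∈ LinearMap.range ((Rinv.comp T).comp Pp : lp (fun _ : I => ℂ) 2 →ₗ[ℂ] H),
      ∃ b ∈ LinearMap.range ((Rinv.comp T).comp Pm : lp (fun _ : I => ℂ) 2 →ₗ[ℂ] H), h = a + b := by
    intro h
    obtain ⟨z, hz⟩ := hTsurj (R h)
    refine ⟨Rinv (T (Pp z)), LinearMap.mem_range.mpr ⟨z, rfl⟩,
      Rinv (T (Pm z)), LinearMap.mem_range.mpr ⟨z, rfl⟩, ?_⟩
    rw [← map_add, ← map_add, hsum z, hz, hRR' h]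
  -- maximality
  have hmaxP : ∀ S' : Submodule ℂ H, UnifJPos J S' →
      LinearMap.range ((Rinv.comp T).comp Pp : lp (fun _ : I => ℂ) 2 →ₗ[ℂ] H) ≤ S' →
      S' = LinearMap.range ((Rinv.comp T).comp Pp : lp (fun _ : I => ℂ) 2 →ₗ[ℂ] H) := by
    intro S' hS' hle
    refine le_antisymm ?_ hle
    intro x hx
    obtain ⟨a, ha, b, hb, hab⟩ := hdecomp x
    obtain ⟨α', hα', hS'2⟩ := hS'
    obtain ⟨β, hβ, hW2⟩ := hWneg
    have hbmem : b ∈ S' := by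
      have hbe : b = x - a := by rw [hab]; abel
      rw [hbe]
      exact Submodule.sub_mem S' hx (hle ha)
    have h1 := hS'2 b hbmem
    have h2 := hW2 b hb
    have h3 : ‖b‖ ^ 2 ≤ 0 := by nlinarith
    have h4 : ‖b‖ = 0 :=
      pow_eq_zero_iff two_ne_zero |>.mp (le_antisymm h3 (sq_nonneg _))
    have hb0 : b = 0 := norm_eq_zero.mp h4
    rw [hab, hb0, add_zero]
    exact ha
  have hmaxM : ∀ S' : Submodule ℂ H, UnifJNeg J S' →
      LinearMap.range ((Rinv.comp T).comp Pm : lp (fun _ : I => ℂ) 2 →ₗ[ℂ] H) ≤ S' →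
      S' = LinearMap.range ((Rinv.comp T).comp Pm : lp (fun _ : I => ℂ) 2 →ₗ[ℂ] H) := by
    intro S' hS' hle
    refine le_antisymm ?_ hle
    intro x hx
    obtain ⟨a, ha, b, hb, hab⟩ := hdecomp x
    obtain ⟨α', hα', hS'2⟩ := hS'
    obtain ⟨β, hβ, hW2⟩ := hWpos
    have hamem : a ∈ S' := by
      have hae : a = x - b := by rw [hab]; abel
      rw [hae]
      exact Submodule.sub_mem S' hx (hle hb)
    have h1 := hS'2 a hamem
    have h2 := hW2 a ha
    have h3 : ‖a‖ ^ 2 ≤ 0 := by nlinarith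
    have h4 : ‖a‖ = 0 :=
      pow_eq_zero_iff two_ne_zero |>.mp (le_antisymm h3 (sq_nonneg _))
    have ha0 : a = 0 := norm_eq_zero.mp h4
    rw [hab, ha0, zero_add]
    exact hb
  -- part 2
  have hpart2 : (Rinv.comp (T.comp Tp)).comp Rinv = ContinuousLinearMap.id ℂ H := by
    ext x
    have : T (Tp (Rinv x)) = R (R (Rinv x)) := hS (Rinv x)
    simp only [ContinuousLinearMap.comp_apply, ContinuousLinearMap.id_apply, this,
      hRR x, hRR' x]
  -- part 3 : signs
  have hsigns : ∀ i, Real.sign ((kre J (Rinv (f i)) (Rinv (f i))).re)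
      = Real.sign ((kre J (f i) (f i)).re) := by
    intro i
    by_cases hp : posIdx J f i
    · have he : Pp (lp.single 2 i (1:ℂ)) = lp.single 2 i 1 := by
        apply lp.ext
        funext j
        rw [hPp]
        by_cases h : posIdx J f j
        · simp [h]
        · have hj : j ≠ i := fun hji => h (hji ▸ hp)
          simp [h, lp.single_apply_ne (E := fun _ : I => ℂ) 2 i (1:ℂ) hj, Pi.single_apply, hj]
      have hfm : f i ∈ LinearMap.range (T.comp Pp : lp (fun _ : I => ℂ) 2 →ₗ[ℂ] H) :=
        LinearMap.mem_range.mpr ⟨lp.single 2 i 1, by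
          simp only [ContinuousLinearMap.coe_coe, ContinuousLinearMap.comp_apply, he, hT]⟩
      have hgm : Rinv (f i) ∈ LinearMap.range ((Rinv.comp T).comp Pp : lp (fun _ : I => ℂ) 2 →ₗ[ℂ] H) :=
        LinearMap.mem_range.mpr ⟨lp.single 2 i 1, by
          simp only [ContinuousLinearMap.coe_coe, ContinuousLinearMap.comp_apply, he, hT]⟩
      by_cases hz : f i = 0
      · rw [hz, map_zero]
      · obtain ⟨α₀, hα₀, hposr⟩ := hJF.1.1
        have h1 := hposr _ hfm
        have hnz : (0:ℝ) < ‖f i‖ := norm_pos_iff.mpr hz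
        have hfpos : 0 < (kre J (f i) (f i)).re :=
          lt_of_lt_of_le (mul_pos hα₀ (pow_pos hnz 2)) h1
        obtain ⟨α, hα, hposW⟩ := hWpos
        have h2 := hposW _ hgm
        have hgz : Rinv (f i) ≠ 0 := fun h => hz (hRinj (by rw [h, map_zero]))
        have hnz2 : (0:ℝ) < ‖Rinv (f i)‖ := norm_pos_iff.mpr hgz
        have hgpos : 0 < (kre J (Rinv (f i)) (Rinv (f i))).re :=
          lt_of_lt_of_le (mul_pos hα (pow_pos hnz2 2)) h2
        rw [Real.sign_of_pos hgpos, Real.sign_of_pos hfpos]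
    · have he : Pm (lp.single 2 i (1:ℂ)) = lp.single 2 i 1 := by
        apply lp.ext
        funext j
        rw [hPm]
        by_cases h : posIdx J f j
        · have hj : j ≠ i := fun hji => hp (hji ▸ h)
          simp [h, lp.single_apply_ne (E := fun _ : I => ℂ) 2 i (1:ℂ) hj, Pi.single_apply, hj]
        · simp [h]
      have hfm : f i ∈ LinearMap.range (T.comp Pm : lp (fun _ : I => ℂ) 2 →ₗ[ℂ] H) :=
        LinearMap.mem_range.mpr ⟨lp.single 2 i 1, by
          simp only [ContinuousLinearMap.coe_coe, ContinuousLinearMap.comp_apply, he, hT]⟩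
      have hgm : Rinv (f i) ∈ LinearMap.range ((Rinv.comp T).comp Pm : lp (fun _ : I => ℂ) 2 →ₗ[ℂ] H) :=
        LinearMap.mem_range.mpr ⟨lp.single 2 i 1, by
          simp only [ContinuousLinearMap.coe_coe, ContinuousLinearMap.comp_apply, he, hT]⟩
      have hfneg : (kre J (f i) (f i)).re < 0 := by
        simp only [posIdx, not_le] at hp
        exact hp
      have hz : f i ≠ 0 := by
        intro h
        rw [h] at hfneg
        simp [kre] at hfneg
      have hgz : Rinv (f i) ≠ 0 := fun h => hz (hRinj (by rw [h, map_zero]))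
      have hnz2 : (0:ℝ) < ‖Rinv (f i)‖ := norm_pos_iff.mpr hgz
      obtain ⟨β, hβ, hnegW⟩ := hWneg
      have h2 := hnegW _ hgm
      have hgneg : (kre J (Rinv (f i)) (Rinv (f i))).re < 0 := by
        have := mul_pos hβ (pow_pos hnz2 2)
        linarith
      rw [Real.sign_of_neg hgneg, Real.sign_of_neg hfneg]
  exact ⟨⟨⟨hWpos, hmaxP⟩, ⟨hWneg, hmaxM⟩⟩, hpart2, hsigns,
    Rinv, R, hR2, hR1, fun i => rfl⟩
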